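/- arXiv:1101.3958 — 2 statements merged into one kernel-verified Lean document; each statement's English description precedes it below -/
import Mathlib

section
/- Let R be a probability measure on a measurable space Ω and let P be a probability measure on Ω with P ≪ R and H(P|R) < ∞. Then H(P|R) = sup { ∫ u dP − log ∫ e^u dR : u : Ω → [−∞, ∞) measurable with ∫ e^u dR < ∞ }, where the convention e^{−∞} = 0 is used and ∫ u dP ∈ [−∞, ∞) is the integral of an extended-real valued function. -/
open MeasureTheory Real Filter Classical
open scoped ENNReal

/-- Relative entropy `H(P|R) ∈ [0,∞]`: the integral `∫ log(dP/dR) dP` if `P ≪ R`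
(with value `+∞` when `log(dP/dR)` is not `P`-integrable), and `+∞` otherwise. -/
noncomputable def relEntropy {Ω : Type*} [MeasurableSpace Ω] (P R : Measure Ω) : EReal :=
  if P ≪ R ∧ Integrable (llr P R) P then ((∫ ω, llr P R ω ∂P : ℝ) : EReal) else ⊤

/-- The nonnegative part of an extended real number, valued in `ℝ≥0∞`
(`⊥ ↦ 0`, `⊤ ↦ ∞`, `x ↦ max x 0`). -/
noncomputable def erealPosPart : EReal → ℝ≥0∞
  | ⊥ => 0
  | ⊤ => ⊤
  | (x : ℝ) => ENNReal.ofReal x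

/-- For a `[−∞,∞)`-valued function `u`, the integral `∫ u dP ∈ [−∞,∞]` encoded in
`EReal` as `∫⁻ u⁺ dP − ∫⁻ u⁻ dP`. -/
noncomputable def erealIntegral {Ω : Type*} [MeasurableSpace Ω] (P : Measure Ω)
    (u : Ω → EReal) : EReal :=
  ((∫⁻ ω, erealPosPart (u ω) ∂P : ℝ≥0∞) : EReal)
    - ((∫⁻ ω, erealPosPart (-(u ω)) ∂P : ℝ≥0∞) : EReal)

lemma erealPosPart_coe (x : ℝ) : erealPosPart (x : EReal) = ENNReal.ofReal x := rfl
lemma erealPosPart_bot : erealPosPart ⊥ = 0 := rfl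
lemma erealPosPart_top : erealPosPart ⊤ = ⊤ := rfl

lemma ennreal_coe_ereal_eq_toReal {a : ℝ≥0∞} (ha : a ≠ ⊤) :
    (a : EReal) = ((a.toReal : ℝ) : EReal) := by
  nth_rewrite 1 [← ENNReal.ofReal_toReal ha]
  rw [EReal.coe_ennreal_ofReal, max_eq_left ENNReal.toReal_nonneg]

lemma erealIntegral_congr_ae {Ω : Type*} [MeasurableSpace Ω] {P : Measure Ω}
    {u u' : Ω → EReal} (h : u =ᵐ[P] u') : erealIntegral P u = erealIntegral P u' := by
  unfold erealIntegral
  have h1 : (fun ω => erealPosPart (u ω)) =ᵐ[P] fun ω => erealPosPart (u' ω) :=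
    h.mono fun ω hω => by simp only [hω]
  have h2 : (fun ω => erealPosPart (-u ω)) =ᵐ[P] fun ω => erealPosPart (-u' ω) :=
    h.mono fun ω hω => by simp only [hω]
  rw [lintegral_congr_ae h1, lintegral_congr_ae h2]

lemma lintegral_ofReal_lt_top_of_integrable {Ω : Type*} [MeasurableSpace Ω] {P : Measure Ω}
    {v : Ω → ℝ} (hv : Integrable v P) : (∫⁻ ω, ENNReal.ofReal (v ω) ∂P) < ⊤ := by
  refine lt_of_le_of_lt (lintegral_mono fun ω => ?_) hv.2
  rw [Real.enorm_eq_ofReal_abs]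
  exact ENNReal.ofReal_le_ofReal (le_abs_self _)

lemma erealIntegral_coe_eq {Ω : Type*} [MeasurableSpace Ω] (P : Measure Ω) {v : Ω → ℝ}
    (hv : Integrable v P) :
    erealIntegral P (fun ω => ((v ω : ℝ) : EReal)) = ((∫ ω, v ω ∂P : ℝ) : EReal) := by
  have hA : (∫⁻ ω, ENNReal.ofReal (v ω) ∂P) ≠ ⊤ :=
    (lintegral_ofReal_lt_top_of_integrable hv).ne
  have hB : (∫⁻ ω, ENNReal.ofReal (-v ω) ∂P) ≠ ⊤ :=
    (lintegral_ofReal_lt_top_of_integrable hv.neg).ne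
  unfold erealIntegral
  have h1 : ∀ ω, erealPosPart ((v ω : EReal)) = ENNReal.ofReal (v ω) := fun ω => rfl
  have h2 : ∀ ω, erealPosPart (-((v ω : ℝ) : EReal)) = ENNReal.ofReal (-v ω) := by
    intro ω; rw [← EReal.coe_neg]; rfl
  simp only [h1, h2]
  rw [ennreal_coe_ereal_eq_toReal hA, ennreal_coe_ereal_eq_toReal hB, ← EReal.coe_sub,
    integral_eq_lintegral_pos_part_sub_lintegral_neg_part hv]

lemma ofReal_max_zero (x : ℝ) : ENNReal.ofReal (max x 0) = ENNReal.ofReal x := by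
  rcases le_total x 0 with h | h
  · rw [max_eq_right h, ENNReal.ofReal_zero, eq_comm, ENNReal.ofReal_eq_zero]; exact h
  · rw [max_eq_left h]

lemma gibbs {Ω : Type*} [MeasurableSpace Ω] (P R : Measure Ω)
    [IsProbabilityMeasure P] [IsProbabilityMeasure R] (hPR : P ≪ R)
    (hint : Integrable (llr P R) P) (u : Ω → EReal) (hu : Measurable u)
    (hut : ∀ ω, u ω ≠ ⊤) (hZ : (∫⁻ ω, (u ω).exp ∂ R) < ⊤) :
    erealIntegral P u - ENNReal.log (∫⁻ ω, (u ω).exp ∂ R)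
      ≤ ((∫ ω, llr P R ω ∂P : ℝ) : EReal) := by
  set Z := ∫⁻ ω, (u ω).exp ∂ R with hZdef
  by_cases hZ0 : Z = 0
  · have hbot : ∀ᵐ ω ∂ R, u ω = ⊥ := by
      have h := (lintegral_eq_zero_iff (hu.ereal_exp)).mp hZ0
      filter_upwards [h] with ω hω
      simpa [EReal.exp_eq_zero_iff] using hω
    have hbotP : ∀ᵐ ω ∂P, u ω = ⊥ := hPR.ae_le hbot
    have hB : (∫⁻ ω, erealPosPart (-(u ω)) ∂P) = ⊤ := by
      have h : (fun ω => erealPosPart (-(u ω))) =ᵐ[P] fun _ => (⊤ : ℝ≥0∞) :=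
        hbotP.mono fun ω hω => by simp [hω, erealPosPart_top]
      rw [lintegral_congr_ae h, lintegral_const]
      simp
    have hEIbot : erealIntegral P u = ⊥ := by
      unfold erealIntegral; rw [hB]; simp only [EReal.coe_ennreal_top, EReal.sub_top]
    rw [hEIbot, EReal.bot_sub]
    exact bot_le
  · have hzpos : 0 < Z.toReal := ENNReal.toReal_pos hZ0 hZ.ne
    set z := Z.toReal with hzdef
    have hlogZ : ENNReal.log Z = ((Real.log z : ℝ) : EReal) := by
      rw [ENNReal.log_pos_real' hzpos]
    by_cases hB : (∫⁻ ω, erealPosPart (-(u ω)) ∂P) = ⊤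
    · have hEIbot : erealIntegral P u = ⊥ := by
        unfold erealIntegral; rw [hB]; simp only [EReal.coe_ennreal_top, EReal.sub_top]
      rw [hEIbot, EReal.bot_sub]
      exact bot_le
    have hEmeas : MeasurableSet {ω | u ω = ⊥} := hu (measurableSet_singleton ⊥)
    have hPE : P {ω | u ω = ⊥} = 0 := by
      by_contra hne
      apply hB
      refine top_unique ?_
      calc (⊤ : ℝ≥0∞) = ∫⁻ ω in {ω | u ω = ⊥}, ⊤ ∂P := by
            rw [setLIntegral_const]; exact (ENNReal.top_mul hne).symm
        _ = ∫⁻ ω in {ω | u ω = ⊥}, erealPosPart (-(u ω)) ∂P := by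
            refine (setLIntegral_congr_fun hEmeas (fun ω hω => ?_)).symm
            simp only [Set.mem_setOf_eq] at hω
            simp [hω, erealPosPart_top]
        _ ≤ ∫⁻ ω, erealPosPart (-(u ω)) ∂P := setLIntegral_le_lintegral _ _
    set v : Ω → ℝ := fun ω => (u ω).toReal with hvdef
    have hvmeas : Measurable v := hu.ereal_toReal
    have h_ne_bot : ∀ᵐ ω ∂P, u ω ≠ ⊥ := by
      rw [ae_iff]; simpa using hPE
    have h_ae : u =ᵐ[P] fun ω => ((v ω : ℝ) : EReal) := by
      filter_upwards [h_ne_bot] with ω hω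
      exact (EReal.coe_toReal (hut ω) hω).symm
    set g : Ω → ℝ := fun ω => v ω - llr P R ω with hgdef
    have hgmeas : Measurable g := hvmeas.sub (measurable_llr P R)
    set W := ∫⁻ ω, ENNReal.ofReal (Real.exp (g ω)) ∂P with hWdef
    have hWZ : W ≤ Z := by
      have hchg : W = ∫⁻ ω, P.rnDeriv R ω * ENNReal.ofReal (Real.exp (g ω)) ∂ R :=
        (MeasureTheory.lintegral_rnDeriv_mul hPR
          (hgmeas.exp.ennreal_ofReal.aemeasurable)).symm
      rw [hchg, hZdef]
      have h1 : ∀ᵐ ω ∂ R, P.rnDeriv R ω < ⊤ := Measure.rnDeriv_lt_top P R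
      have h2 : ∀ᵐ ω ∂ R, ω ∈ {ω | u ω = ⊥} → P.rnDeriv R ω = 0 := by
        have h0 : ∫⁻ ω in {ω | u ω = ⊥}, P.rnDeriv R ω ∂ R = 0 := by
          rw [Measure.setLIntegral_rnDeriv hPR]; exact hPE
        have h := (setLIntegral_eq_zero_iff hEmeas (Measure.measurable_rnDeriv P R)).mp h0
        exact h
      refine lintegral_mono_ae ?_
      filter_upwards [h1, h2] with ω hlt himp
      by_cases h0 : P.rnDeriv R ω = 0
      · simp [h0]
      · have hbω : u ω ≠ ⊥ := fun hb => h0 (himp hb)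
        have huv : u ω = ((v ω : ℝ) : EReal) := (EReal.coe_toReal (hut ω) hbω).symm
        have htpos : 0 < (P.rnDeriv R ω).toReal := ENNReal.toReal_pos h0 hlt.ne
        have hrn : P.rnDeriv R ω = ENNReal.ofReal (P.rnDeriv R ω).toReal :=
          (ENNReal.ofReal_toReal hlt.ne).symm
        rw [huv, EReal.exp_coe]
        nth_rewrite 1 [hrn]
        rw [← ENNReal.ofReal_mul ENNReal.toReal_nonneg]
        refine le_of_eq (congrArg _ ?_)
        show (P.rnDeriv R ω).toReal * Real.exp (v ω - llr P R ω) = Real.exp (v ω)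
        rw [Real.exp_sub]
        have hllr : llr P R ω = Real.log (P.rnDeriv R ω).toReal := rfl
        rw [hllr, Real.exp_log htpos]
        field_simp
    have hexpg_int : Integrable (fun ω => Real.exp (g ω)) P := by
      refine ⟨(hgmeas.exp).aestronglyMeasurable, ?_⟩
      rw [hasFiniteIntegral_iff_ofReal (ae_of_all _ fun ω => (Real.exp_pos _).le)]
      exact lt_of_le_of_lt hWZ hZ
    set z' := ∫ ω, Real.exp (g ω) ∂P with hz'def
    have hz'pos : 0 < z' := integral_exp_pos hexpg_int
    have hz'le : z' ≤ z := by
      rw [hz'def, integral_eq_lintegral_of_nonneg_ae (ae_of_all _ fun ω => (Real.exp_pos _).le)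
        (hgmeas.exp).aestronglyMeasurable]
      exact ENNReal.toReal_mono hZ.ne hWZ
    have hgplus_int : Integrable (fun ω => max (g ω) 0) P := by
      refine ⟨(hgmeas.max measurable_const).aestronglyMeasurable, ?_⟩
      have hnn : 0 ≤ᵐ[P] fun ω => max (g ω) 0 := ae_of_all _ fun ω => le_max_right _ _
      rw [hasFiniteIntegral_iff_ofReal hnn]
      refine lt_of_le_of_lt (lintegral_mono fun ω => ENNReal.ofReal_le_ofReal ?_)
        (lt_of_le_of_lt hWZ hZ)
      rcases le_total (g ω) 0 with h | h
      · rw [max_eq_right h]; exact (Real.exp_pos _).le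
      · rw [max_eq_left h]; linarith [Real.add_one_le_exp (g ω)]
    have hvminus_int : Integrable (fun ω => max (-v ω) 0) P := by
      refine ⟨((hvmeas.neg).max measurable_const).aestronglyMeasurable, ?_⟩
      have hnn : 0 ≤ᵐ[P] fun ω => max (-v ω) 0 := ae_of_all _ fun ω => le_max_right _ _
      rw [hasFiniteIntegral_iff_ofReal hnn]
      have h : (fun ω => ENNReal.ofReal (max (-v ω) 0)) =ᵐ[P] fun ω => erealPosPart (-(u ω)) := by
        filter_upwards [h_ae] with ω hω
        rw [hω, ← EReal.coe_neg, erealPosPart_coe, ofReal_max_zero]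
      rw [lintegral_congr_ae h]
      exact lt_top_iff_ne_top.mpr hB
    have hvplus_int : Integrable (fun ω => max (v ω) 0) P := by
      refine Integrable.mono' (hgplus_int.add hint.abs)
        ((hvmeas.max measurable_const).aestronglyMeasurable) (ae_of_all _ fun ω => ?_)
      rw [Real.norm_eq_abs, abs_of_nonneg (le_max_right _ _)]
      simp only [Pi.add_apply]
      have hveq : v ω = g ω + llr P R ω := by simp [hgdef]
      have h1 := le_max_right (g ω) 0
      have h2 := abs_nonneg (llr P R ω)
      have h3 := le_max_left (g ω) 0
      have h4 := le_abs_self (llr P R ω)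
      rcases le_total (v ω) 0 with h | h
      · rw [max_eq_right h]
        linarith
      · rw [max_eq_left h, hveq]
        linarith
    have hv_int : Integrable v P := by
      exact (hvplus_int.sub hvminus_int).congr
        (ae_of_all _ fun ω => by simp [Pi.sub_apply, max_zero_sub_eq_self])
    have hg_int : Integrable g P := hv_int.sub hint
    have hintg_le : ∫ ω, g ω ∂P ≤ Real.log z' := by
      have hpt : ∀ ω, g ω ≤ Real.exp (g ω) / z' - 1 + Real.log z' := by
        intro ω
        have h1 := Real.add_one_le_exp (g ω - Real.log z')
        rw [Real.exp_sub, Real.exp_log hz'pos] at h1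
        linarith
      calc ∫ ω, g ω ∂P ≤ ∫ ω, (Real.exp (g ω) / z' - 1 + Real.log z') ∂P :=
            integral_mono hg_int
              (((hexpg_int.div_const _).sub (integrable_const 1)).add (integrable_const _)) hpt
        _ = Real.log z' := by
            have hint1 : Integrable (fun ω => Real.exp (g ω) / z' - 1) P :=
              (hexpg_int.div_const _).sub (integrable_const 1)
            have hint2 : Integrable (fun ω => Real.exp (g ω) / z') P :=
              hexpg_int.div_const _
            rw [integral_add hint1 (integrable_const _),
              integral_sub hint2 (integrable_const 1), integral_div, integral_const,
              integral_const]
            simp only [measure_univ, probReal_univ, ENNReal.toReal_one, one_smul, smul_eq_mul, one_mul]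
            rw [← hz'def, div_self hz'pos.ne']
            ring
    have hintv_le : ∫ ω, v ω ∂P ≤ Real.log z + ∫ ω, llr P R ω ∂P := by
      have hsplit : ∫ ω, v ω ∂P = ∫ ω, g ω ∂P + ∫ ω, llr P R ω ∂P := by
        rw [← integral_add hg_int hint]
        refine integral_congr_ae (ae_of_all _ fun ω => ?_)
        simp [hgdef]
      rw [hsplit]
      have hll := Real.log_le_log hz'pos hz'le
      linarith
    rw [erealIntegral_congr_ae h_ae, erealIntegral_coe_eq P hv_int, hlogZ, ← EReal.coe_sub,
      EReal.coe_le_coe_iff]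
    linarith

/-- For `P ≪ R` with `H(P|R) < ∞`,
`H(P|R) = sup { ∫ u dP − log ∫ e^u dR : u : Ω → [−∞,∞) measurable, ∫ e^u dR < ∞ }`,
where `e^{−∞} = 0` (via `EReal.exp`) and `∫ u dP ∈ [−∞,∞)` is the integral of the
extended-real valued function `u`. -/
theorem relEntropy_eq_sup_ereal_valued {Ω : Type*} [MeasurableSpace Ω]
    (P R : Measure Ω) [IsProbabilityMeasure P] [IsProbabilityMeasure R] (hPR : P ≪ R)
    (hH : relEntropy P R < ⊤) :
    relEntropy P R =
      sSup {x : EReal | ∃ u : Ω → EReal, Measurable u ∧ (∀ ω, u ω ≠ ⊤) ∧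
        (lintegral R (fun ω => EReal.exp (u ω))) < ⊤ ∧
        x = erealIntegral P u - ENNReal.log (lintegral R (fun ω => EReal.exp (u ω)))} := by
  have hint : Integrable (llr P R) P := by
    by_contra h
    rw [relEntropy, if_neg (fun hc => h hc.2)] at hH
    exact lt_irrefl _ hH
  have hRE : relEntropy P R = ((∫ ω, llr P R ω ∂P : ℝ) : EReal) := by
    rw [relEntropy, if_pos ⟨hPR, hint⟩]
  rw [hRE]
  refine le_antisymm ?_ ?_
  · set f := P.rnDeriv R with hf
    set u₀ : Ω → EReal := fun ω => ENNReal.log (if f ω = ⊤ then 0 else f ω) with hu₀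
    have hfmeas : Measurable f := Measure.measurable_rnDeriv P R
    have hu₀meas : Measurable u₀ :=
      (Measurable.ite (hfmeas (measurableSet_singleton ⊤)) measurable_const hfmeas).ennreal_log
    have hu₀top : ∀ ω, u₀ ω ≠ ⊤ := by
      intro ω
      simp only [hu₀]
      split_ifs with h
      · simp
      · simp [ENNReal.log_eq_top_iff, h]
    have hZ1 : (∫⁻ ω, (u₀ ω).exp ∂ R) = 1 := by
      have h1 : ∀ ω, (u₀ ω).exp = (if f ω = ⊤ then 0 else f ω) := fun ω => ENNReal.exp_log _
      simp_rw [h1]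
      have h2 : (fun ω => if f ω = ⊤ then 0 else f ω) =ᵐ[R] f := by
        filter_upwards [Measure.rnDeriv_lt_top P R] with ω hω
        simp [hf, hω.ne]
      rw [lintegral_congr_ae h2, Measure.lintegral_rnDeriv hPR, measure_univ]
    have h_ae : u₀ =ᵐ[P] fun ω => ((llr P R ω : ℝ) : EReal) := by
      filter_upwards [Measure.rnDeriv_pos hPR, hPR.ae_le (Measure.rnDeriv_lt_top P R)]
        with ω h0 htop
      simp only [hu₀]
      rw [if_neg htop.ne, ENNReal.log_pos_real' (ENNReal.toReal_pos h0.ne' htop.ne)]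
      rfl
    refine le_sSup ⟨u₀, hu₀meas, hu₀top, by rw [hZ1]; exact ENNReal.one_lt_top, ?_⟩
    rw [hZ1, ENNReal.log_one, erealIntegral_congr_ae h_ae, erealIntegral_coe_eq P hint]
    simp
  · refine sSup_le ?_
    rintro x ⟨u, hu, hut, hZ, rfl⟩
    exact gibbs P R hPR hint u hu hut hZ
end

section
/- Let R be a probability measure on a measurable space Ω and let P be a probability measure on Ω with P ≪ R. Then H(P|R) = sup { ∫ u dP − ∫ (e^u − 1) dR : u : Ω → ℝ measurable, ∫ e^u dR < ∞ and ∫ u⁻ dP < ∞ } ∈ [0, ∞], where u⁻ := max(−u, 0), so that ∫ u dP ∈ (−∞, ∞] is well-defined for each admissible u. -/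
open MeasureTheory Real Filter Classical
open scoped ENNReal Topology

section Helpers
variable {Ω : Type*} [MeasurableSpace Ω] {P : Measure Ω}

lemma hlp_nnnorm_eq (x : ℝ) :
    (‖x‖₊ : ℝ≥0∞) = ENNReal.ofReal x + ENNReal.ofReal (-x) := by
  rcases le_total 0 x with h | h
  · rw [ENNReal.ofReal_eq_zero.2 (by linarith : -x ≤ 0), add_zero,
      ← enorm_eq_nnnorm, Real.enorm_eq_ofReal_abs, abs_of_nonneg h]
  · rw [ENNReal.ofReal_eq_zero.2 h, zero_add, ← enorm_eq_nnnorm, Real.enorm_eq_ofReal_abs, abs_of_nonpos h]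

lemma hlp_lint_pos_lt_top {u : Ω → ℝ} (hu : Integrable u P) :
    ∫⁻ ω, ENNReal.ofReal (u ω) ∂P < ⊤ := by
  refine lt_of_le_of_lt (lintegral_mono fun ω => ?_) hu.2
  rw [enorm_eq_nnnorm, hlp_nnnorm_eq]; exact le_self_add

lemma hlp_lint_neg_lt_top {u : Ω → ℝ} (hu : Integrable u P) :
    ∫⁻ ω, ENNReal.ofReal (-u ω) ∂P < ⊤ := by
  refine lt_of_le_of_lt (lintegral_mono fun ω => ?_) hu.2
  rw [enorm_eq_nnnorm, hlp_nnnorm_eq]; exact le_add_self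

lemma hlp_integrable_of_parts {u : Ω → ℝ} (hm : Measurable u)
    (h1 : ∫⁻ ω, ENNReal.ofReal (u ω) ∂P < ⊤)
    (h2 : ∫⁻ ω, ENNReal.ofReal (-u ω) ∂P < ⊤) : Integrable u P := by
  refine ⟨hm.aestronglyMeasurable, ?_⟩
  rw [HasFiniteIntegral]
  calc ∫⁻ ω, (‖u ω‖₊ : ℝ≥0∞) ∂P
      = ∫⁻ ω, (ENNReal.ofReal (u ω) + ENNReal.ofReal (-u ω)) ∂P := by
        simp_rw [hlp_nnnorm_eq]
    _ = (∫⁻ ω, ENNReal.ofReal (u ω) ∂P) + ∫⁻ ω, ENNReal.ofReal (-u ω) ∂P :=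
        lintegral_add_left (hm.ennreal_ofReal) _
    _ < ⊤ := ENNReal.add_lt_top.2 ⟨h1, h2⟩

lemma hlp_integrable_of_nonneg {u : Ω → ℝ} (hm : Measurable u) (hnn : ∀ ω, 0 ≤ u ω)
    (h : ∫⁻ ω, ENNReal.ofReal (u ω) ∂P < ⊤) : Integrable u P := by
  refine hlp_integrable_of_parts hm h ?_
  have : ∀ ω, ENNReal.ofReal (-u ω) = 0 := fun ω =>
    ENNReal.ofReal_eq_zero.2 (by linarith [hnn ω])
  simp [this]

lemma hlp_value_eq {u : Ω → ℝ} (hu : Integrable u P) (c : ℝ) :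
    ((∫⁻ ω, ENNReal.ofReal (u ω) ∂P : ℝ≥0∞) : EReal)
      - ((∫⁻ ω, ENNReal.ofReal (-(u ω)) ∂P : ℝ≥0∞) : EReal) - (c : EReal)
    = ((∫ ω, u ω ∂P - c : ℝ) : EReal) := by
  have h1 := hlp_lint_pos_lt_top hu
  have h2 := hlp_lint_neg_lt_top hu
  have key : ∀ a : ℝ≥0∞, a ≠ ⊤ → ((a : EReal) = ((a.toReal : ℝ) : EReal)) := by
    intro a ha
    rw [← EReal.toReal_coe_ennreal]
    exact (EReal.coe_toReal (by simp [ha]) (by simp)).symm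
  rw [integral_eq_lintegral_pos_part_sub_lintegral_neg_part hu,
    key _ h1.ne, key _ h2.ne, ← EReal.coe_sub, ← EReal.coe_sub]

lemma hlp_log_ineq {g u : ℝ} (hg : 0 < g) : u ≤ Real.log g + Real.exp u / g - 1 := by
  have h := Real.log_le_sub_one_of_pos (show 0 < Real.exp u / g from
    div_pos (Real.exp_pos u) hg)
  rw [Real.log_div (Real.exp_ne_zero u) hg.ne', Real.log_exp] at h
  linarith

lemma hlp_mul_neg_log_le_one {t : ℝ} (ht : 0 ≤ t) : t * (-Real.log t) ≤ 1 := by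
  rcases eq_or_lt_of_le ht with h | h
  · simp [← h]
  · have h2 : Real.log t⁻¹ ≤ t⁻¹ - 1 := Real.log_le_sub_one_of_pos (by positivity)
    rw [Real.log_inv] at h2
    calc t * (-Real.log t) ≤ t * (t⁻¹ - 1) := by nlinarith
      _ = 1 - t := by field_simp
      _ ≤ 1 := by linarith

lemma hlp_ofReal_neg_min (a : ℝ) (n : ℕ) :
    ENNReal.ofReal (-(min a n)) = ENNReal.ofReal (-a) := by
  rcases le_total a (n : ℝ) with h | h
  · rw [min_eq_left h]
  · rw [min_eq_right h]
    have h1 : -(n:ℝ) ≤ 0 := neg_nonpos.2 (Nat.cast_nonneg n)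
    have h2 : -a ≤ 0 := by linarith
    rw [ENNReal.ofReal_eq_zero.2 h1, ENNReal.ofReal_eq_zero.2 h2]

end Helpers

section Upper
variable {Ω : Type*} [MeasurableSpace Ω]

lemma hlp_upper (P R : Measure Ω) [IsProbabilityMeasure P] [IsProbabilityMeasure R]
    (hPR : P ≪ R) (hInt : Integrable (llr P R) P)
    {u : Ω → ℝ} (hum : Measurable u) (hexp : Integrable (fun ω => Real.exp (u ω)) R)
    (hneg : (∫⁻ ω, ENNReal.ofReal (-(u ω)) ∂P) < ⊤) :
    ((∫⁻ ω, ENNReal.ofReal (u ω) ∂P : ℝ≥0∞) : EReal)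
      - ((∫⁻ ω, ENNReal.ofReal (-(u ω)) ∂P : ℝ≥0∞) : EReal)
      - ((∫ ω, (Real.exp (u ω) - 1) ∂ R : ℝ) : EReal)
      ≤ ((∫ ω, llr P R ω ∂P : ℝ) : EReal) := by
  set g : Ω → ℝ := fun ω => (P.rnDeriv R ω).toReal with hg
  have hgm : Measurable g := (Measure.measurable_rnDeriv P R).ennreal_toReal
  have hgpos : ∀ᵐ ω ∂P, 0 < g ω := by
    filter_upwards [Measure.rnDeriv_pos hPR, hPR.ae_le (Measure.rnDeriv_lt_top P R)]
      with ω h1 h2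
    exact ENNReal.toReal_pos h1.ne' h2.ne
  set φ : Ω → ℝ := fun ω => Real.exp (u ω) / g ω with hφ
  have hφm : Measurable φ := (Real.measurable_exp.comp hum).div hgm
  have hφnn : ∀ ω, 0 ≤ φ ω := fun ω => div_nonneg (Real.exp_pos _).le ENNReal.toReal_nonneg
  have hkey : ∫⁻ ω, ENNReal.ofReal (φ ω) ∂P ≤ ∫⁻ ω, ENNReal.ofReal (Real.exp (u ω)) ∂ R := by
    rw [← lintegral_rnDeriv_mul hPR (hφm.ennreal_ofReal.aemeasurable)]
    refine lintegral_mono_ae ?_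
    filter_upwards [Measure.rnDeriv_lt_top P R] with ω hlt
    have hrw : P.rnDeriv R ω = ENNReal.ofReal (g ω) := (ENNReal.ofReal_toReal hlt.ne).symm
    rw [hrw, ← ENNReal.ofReal_mul ENNReal.toReal_nonneg]
    rcases eq_or_lt_of_le (ENNReal.toReal_nonneg : (0:ℝ) ≤ g ω) with h0 | h0
    · simp [hφ, ← h0]
    · rw [show g ω * φ ω = Real.exp (u ω) by rw [hφ]; field_simp [show g ω ≠ 0 from h0.ne']]
  have hexpR : ∫⁻ ω, ENNReal.ofReal (Real.exp (u ω)) ∂ R < ⊤ := hlp_lint_pos_lt_top hexp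
  have hφfin := lt_of_le_of_lt hkey hexpR
  have hφint : Integrable φ P := hlp_integrable_of_nonneg hφm hφnn hφfin
  have hptwise : ∀ᵐ ω ∂P, u ω ≤ llr P R ω + φ ω - 1 := by
    filter_upwards [hgpos] with ω h
    exact hlp_log_ineq h
  have hupos : ∫⁻ ω, ENNReal.ofReal (u ω) ∂P < ⊤ := by
    refine lt_of_le_of_lt (lintegral_mono_ae ?_)
      (?_ : ∫⁻ ω, (ENNReal.ofReal (llr P R ω) + ENNReal.ofReal (φ ω)) ∂P < ⊤)
    · filter_upwards [hptwise] with ω h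
      calc ENNReal.ofReal (u ω) ≤ ENNReal.ofReal (llr P R ω + φ ω) := by
            apply ENNReal.ofReal_le_ofReal; linarith
        _ ≤ _ := ENNReal.ofReal_add_le
    · rw [lintegral_add_left ((measurable_llr P R).ennreal_ofReal)]
      exact ENNReal.add_lt_top.2 ⟨hlp_lint_pos_lt_top hInt, hφfin⟩
  have huint : Integrable u P := hlp_integrable_of_parts hum hupos hneg
  rw [hlp_value_eq huint, EReal.coe_le_coe_iff]
  have hsum : Integrable (fun ω => llr P R ω + φ ω - 1) P :=
    (hInt.add hφint).sub (integrable_const 1)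
  have h1 : ∫ ω, u ω ∂P ≤ ∫ ω, (llr P R ω + φ ω - 1) ∂P :=
    integral_mono_ae huint hsum hptwise
  have hsum2 : Integrable (fun ω => llr P R ω + φ ω) P := hInt.add hφint
  have h2 : ∫ ω, (llr P R ω + φ ω - 1) ∂P = ∫ ω, llr P R ω ∂P + ∫ ω, φ ω ∂P - 1 := by
    rw [integral_sub hsum2 (integrable_const 1), integral_add hInt hφint, integral_const]
    simp
  have h3 : ∫ ω, φ ω ∂P ≤ ∫ ω, Real.exp (u ω) ∂ R := by
    rw [integral_eq_lintegral_of_nonneg_ae (Eventually.of_forall hφnn)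
        hφm.aestronglyMeasurable,
      integral_eq_lintegral_of_nonneg_ae
        (Eventually.of_forall fun ω => (Real.exp_pos (u ω)).le)
        (Real.measurable_exp.comp hum).aestronglyMeasurable]
    exact ENNReal.toReal_mono hexpR.ne hkey
  have h4 : ∫ ω, (Real.exp (u ω) - 1) ∂ R = ∫ ω, Real.exp (u ω) ∂ R - 1 := by
    rw [integral_sub hexp (integrable_const 1), integral_const]
    simp
  linarith

end Upper

section LowerAux
variable {Ω : Type*} [MeasurableSpace Ω]

lemma hlp_ofReal_max (a : ℝ) : ENNReal.ofReal (max a 0) = ENNReal.ofReal a := by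
  rcases le_total 0 a with h | h
  · rw [max_eq_left h]
  · rw [max_eq_right h, ENNReal.ofReal_zero, eq_comm, ENNReal.ofReal_eq_zero]
    exact h

lemma hlp_llr_neg (P R : Measure Ω) [IsProbabilityMeasure P] [IsProbabilityMeasure R]
    (hPR : P ≪ R) : ∫⁻ ω, ENNReal.ofReal (-(llr P R ω)) ∂P ≤ 1 := by
  have hm : Measurable fun ω => ENNReal.ofReal (-(llr P R ω)) :=
    ((measurable_llr P R).neg).ennreal_ofReal
  rw [← lintegral_rnDeriv_mul hPR hm.aemeasurable]
  calc ∫⁻ ω, P.rnDeriv R ω * ENNReal.ofReal (-(llr P R ω)) ∂ R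
      ≤ ∫⁻ _, 1 ∂ R := by
        refine lintegral_mono_ae ?_
        filter_upwards [Measure.rnDeriv_lt_top P R] with ω hlt
        have hrw : P.rnDeriv R ω = ENNReal.ofReal ((P.rnDeriv R ω).toReal) :=
          (ENNReal.ofReal_toReal hlt.ne).symm
        rw [hrw, ← ENNReal.ofReal_mul ENNReal.toReal_nonneg]
        exact ENNReal.ofReal_le_one.2 (hlp_mul_neg_log_le_one ENNReal.toReal_nonneg)
    _ = 1 := by simp

end LowerAux


/-- `H(P|R) = sup { ∫ u dP − ∫ (e^u − 1) dR : u measurable, ∫ e^u dR < ∞, ∫ u⁻ dP < ∞ }`.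
For admissible `u`, `∫ u dP ∈ (−∞,∞]` is well-defined; it is encoded in `EReal` as
`∫⁻ u⁺ dP − ∫⁻ u⁻ dP`, where the subtracted (negative-part) term is finite. -/
theorem relEntropy_eq_sup_negPart_integrable {Ω : Type*} [MeasurableSpace Ω]
    (P R : Measure Ω) [IsProbabilityMeasure P] [IsProbabilityMeasure R] (hPR : P ≪ R) :
    relEntropy P R =
      sSup {x : EReal | ∃ u : Ω → ℝ, Measurable u ∧
        Integrable (fun ω => Real.exp (u ω)) R ∧
        (∫⁻ ω, ENNReal.ofReal (-(u ω)) ∂P) < ⊤ ∧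
        x = ((∫⁻ ω, ENNReal.ofReal (u ω) ∂P : ℝ≥0∞) : EReal)
              - ((∫⁻ ω, ENNReal.ofReal (-(u ω)) ∂P : ℝ≥0∞) : EReal)
              - ((∫ ω, (Real.exp (u ω) - 1) ∂ R : ℝ) : EReal)} := by
  refine le_antisymm ?_ (sSup_le ?_)
  case refine_2 =>
    rintro x ⟨u, hum, hexp, hneg, rfl⟩
    by_cases hInt : Integrable (llr P R) P
    · rw [relEntropy, if_pos ⟨hPR, hInt⟩]
      exact hlp_upper P R hPR hInt hum hexp hneg
    · rw [relEntropy, if_neg (fun h => hInt h.2)]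
      exact le_top
  -- lower bound
  set g : Ω → ℝ := fun ω => (P.rnDeriv R ω).toReal with hgdef
  have hgm : Measurable g := (Measure.measurable_rnDeriv P R).ennreal_toReal
  have hgpos : ∀ᵐ ω ∂P, 0 < g ω := by
    filter_upwards [Measure.rnDeriv_pos hPR, hPR.ae_le (Measure.rnDeriv_lt_top P R)]
      with ω h1 h2
    exact ENNReal.toReal_pos h1.ne' h2.ne
  have hgint : Integrable g R := Measure.integrable_toReal_rnDeriv
  have hgmean : ∫ ω, g ω ∂ R = 1 := by
    rw [hgdef, Measure.integral_toReal_rnDeriv hPR]; simp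
  set un : ℕ → Ω → ℝ := fun n ω => if g ω = 0 then -(n:ℝ) else min (Real.log (g ω)) n
    with hun
  set m : ℕ → Ω → ℝ := fun n ω => min (llr P R ω) n with hm
  have hllr_eq : ∀ ω, llr P R ω = Real.log (g ω) := fun ω => rfl
  have hunm : ∀ n, Measurable (un n) := fun n =>
    Measurable.ite (hgm (measurableSet_singleton 0)) measurable_const
      ((hgm.log).min measurable_const)
  have hmm : ∀ n, Measurable (m n) := fun n => (measurable_llr P R).min measurable_const
  have hae : ∀ n, un n =ᵐ[P] m n := by
    intro n; filter_upwards [hgpos] with ω h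
    simp only [hun, hm, h.ne', if_false, hllr_eq]
  have hnegeq : ∀ n, ∫⁻ ω, ENNReal.ofReal (-(un n ω)) ∂P
      = ∫⁻ ω, ENNReal.ofReal (-(llr P R ω)) ∂P := by
    intro n
    refine lintegral_congr_ae ?_
    filter_upwards [hgpos] with ω h
    simp only [hun, h.ne', if_false]
    rw [← hllr_eq ω]
    exact hlp_ofReal_neg_min _ n
  have hnegllr : ∫⁻ ω, ENNReal.ofReal (-(llr P R ω)) ∂P ≤ 1 := hlp_llr_neg P R hPR
  have hnegint : Integrable (fun ω => max (-(llr P R ω)) 0) P := by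
    refine hlp_integrable_of_nonneg ((measurable_llr P R).neg.max measurable_const)
      (fun ω => le_max_right _ _) ?_
    have heq : ∀ ω, ENNReal.ofReal (max (-(llr P R ω)) 0) = ENNReal.ofReal (-(llr P R ω)) :=
      fun ω => hlp_ofReal_max _
    rw [lintegral_congr fun ω => heq ω]
    exact hnegllr.trans_lt ENNReal.one_lt_top
  have hmint : ∀ n, Integrable (m n) P := by
    intro n
    refine Integrable.mono' (g := fun ω => (n:ℝ) + max (-(llr P R ω)) 0)
      ((integrable_const _).add hnegint) (hmm n).aestronglyMeasurable
      (Eventually.of_forall fun ω => ?_)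
    rw [Real.norm_eq_abs, abs_le]
    have hn0 : (0:ℝ) ≤ n := Nat.cast_nonneg n
    constructor
    · rcases le_total (llr P R ω) 0 with h | h
      · rw [hm]; dsimp only
        rw [min_eq_left (h.trans hn0), max_eq_left (by linarith)]
        linarith
      · rw [hm]; dsimp only
        have : 0 ≤ min (llr P R ω) n := le_min h hn0
        have : -(max (-(llr P R ω)) 0) ≤ 0 := neg_nonpos.2 (le_max_right _ _)
        linarith
    · rw [hm]; dsimp only
      have := min_le_right (llr P R ω) (n:ℝ)
      have := le_max_right (-(llr P R ω)) 0
      linarith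
  have hunint : ∀ n, Integrable (un n) P := fun n => (hmint n).congr (hae n).symm
  have hexpn : ∀ n, Integrable (fun ω => Real.exp (un n ω)) R := by
    intro n
    refine Integrable.mono' (integrable_const (Real.exp n))
      ((Real.measurable_exp.comp (hunm n)).aestronglyMeasurable)
      (Eventually.of_forall fun ω => ?_)
    rw [Real.norm_eq_abs, abs_of_pos (Real.exp_pos _)]
    apply Real.exp_le_exp.2
    rw [hun]; dsimp only
    have hn0 : (0:ℝ) ≤ n := Nat.cast_nonneg n
    split
    · linarith
    · exact min_le_right _ _
  have hnegfin : ∀ n, ∫⁻ ω, ENNReal.ofReal (-(un n ω)) ∂P < ⊤ := fun n => by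
    rw [hnegeq n]; exact hnegllr.trans_lt ENNReal.one_lt_top
  set a : ℕ → ℝ := fun n => ∫ ω, un n ω ∂P - ∫ ω, (Real.exp (un n ω) - 1) ∂ R with hadef
  have hmem : ∀ n, ((a n : ℝ) : EReal) ∈ {x : EReal | ∃ u : Ω → ℝ, Measurable u ∧
        Integrable (fun ω => Real.exp (u ω)) R ∧
        (∫⁻ ω, ENNReal.ofReal (-(u ω)) ∂P) < ⊤ ∧
        x = ((∫⁻ ω, ENNReal.ofReal (u ω) ∂P : ℝ≥0∞) : EReal)
              - ((∫⁻ ω, ENNReal.ofReal (-(u ω)) ∂P : ℝ≥0∞) : EReal)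
              - ((∫ ω, (Real.exp (u ω) - 1) ∂ R : ℝ) : EReal)} := fun n =>
    ⟨un n, hunm n, hexpn n, hnegfin n, (hlp_value_eq (hunint n) _).symm⟩
  have hexp_tendsto : Tendsto (fun n => ∫ ω, Real.exp (un n ω) ∂ R) atTop (𝓝 1) := by
    rw [← hgmean]
    refine tendsto_integral_of_dominated_convergence (fun ω => g ω + 1)
      (fun n => (Real.measurable_exp.comp (hunm n)).aestronglyMeasurable)
      (hgint.add (integrable_const 1)) (fun n => Eventually.of_forall fun ω => ?_)
      (Eventually.of_forall fun ω => ?_)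
    · rw [Real.norm_eq_abs, abs_of_pos (Real.exp_pos _)]
      have hg0 : 0 ≤ g ω := ENNReal.toReal_nonneg
      rw [hun]; dsimp only
      split_ifs with h
      · have : Real.exp (-(n:ℝ)) ≤ Real.exp 0 :=
          Real.exp_le_exp.2 (neg_nonpos.2 (Nat.cast_nonneg n))
        rw [Real.exp_zero] at this
        linarith
      · rcases le_total (Real.log (g ω)) 0 with hl | hl
        · have : Real.exp (min (Real.log (g ω)) n) ≤ Real.exp 0 :=
            Real.exp_le_exp.2 ((min_le_left _ _).trans hl)
          rw [Real.exp_zero] at this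
          linarith
        · have hgp : 0 < g ω := lt_of_le_of_ne hg0 (Ne.symm h)
          have : Real.exp (min (Real.log (g ω)) n) ≤ Real.exp (Real.log (g ω)) :=
            Real.exp_le_exp.2 (min_le_left _ _)
          rw [Real.exp_log hgp] at this
          linarith
    · rw [hun]; dsimp only
      by_cases h : g ω = 0
      · simp only [h, if_true]
        exact Real.tendsto_exp_atBot.comp
          (tendsto_neg_atTop_atBot.comp tendsto_natCast_atTop_atTop)
      · simp only [h, if_false]
        have hgp : 0 < g ω := lt_of_le_of_ne ENNReal.toReal_nonneg (Ne.symm h)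
        have hev : ∀ᶠ n : ℕ in atTop,
            Real.exp (min (Real.log (g ω)) n) = g ω := by
          obtain ⟨N, hN⟩ := exists_nat_ge (Real.log (g ω))
          refine eventually_atTop.2 ⟨N, fun k hk => ?_⟩
          rw [min_eq_left (hN.trans (Nat.cast_le.2 hk)), Real.exp_log hgp]
        exact (tendsto_congr' hev).2 tendsto_const_nhds
  have hcn : ∀ n, ∫ ω, (Real.exp (un n ω) - 1) ∂ R = ∫ ω, Real.exp (un n ω) ∂ R - 1 := by
    intro n
    rw [integral_sub (hexpn n) (integrable_const 1), integral_const]; simp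
  have hc_tendsto : Tendsto (fun n => ∫ ω, (Real.exp (un n ω) - 1) ∂ R) atTop (𝓝 0) := by
    simp_rw [hcn]
    simpa using hexp_tendsto.sub_const 1
  by_cases hInt : Integrable (llr P R) P
  · rw [relEntropy, if_pos ⟨hPR, hInt⟩]
    have hb : Tendsto (fun n => ∫ ω, un n ω ∂P) atTop (𝓝 (∫ ω, llr P R ω ∂P)) := by
      have hco : ∀ n, ∫ ω, un n ω ∂P = ∫ ω, m n ω ∂P := fun n => integral_congr_ae (hae n)
      simp_rw [hco]
      refine tendsto_integral_of_dominated_convergence (fun ω => |llr P R ω|)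
        (fun n => (hmm n).aestronglyMeasurable) hInt.abs
        (fun n => Eventually.of_forall fun ω => ?_) (Eventually.of_forall fun ω => ?_)
      · rw [Real.norm_eq_abs, abs_le, hm]; dsimp only
        have hn0 : (0:ℝ) ≤ n := Nat.cast_nonneg n
        constructor
        · rcases le_total (llr P R ω) 0 with h | h
          · rw [min_eq_left (h.trans hn0)]
            exact neg_abs_le _
          · have h1 : 0 ≤ min (llr P R ω) n := le_min h hn0
            have h2 : -|llr P R ω| ≤ 0 := neg_nonpos.2 (abs_nonneg _)
            linarith
        · exact (min_le_left _ _).trans (le_abs_self _)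
      · obtain ⟨N, hN⟩ := exists_nat_ge (llr P R ω)
        refine (tendsto_congr' ?_).2 tendsto_const_nhds
        refine eventually_atTop.2 ⟨N, fun k hk => ?_⟩
        rw [hm]; dsimp only
        rw [min_eq_left (hN.trans (Nat.cast_le.2 hk))]
    have ha_t : Tendsto (fun n => ((a n : ℝ) : EReal)) atTop
        (𝓝 ((∫ ω, llr P R ω ∂P : ℝ) : EReal)) := by
      apply EReal.tendsto_coe.2
      simpa using hb.sub hc_tendsto
    exact le_of_tendsto ha_t (Eventually.of_forall fun n => le_sSup (hmem n))
  · rw [relEntropy, if_neg (fun hc => hInt hc.2)]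
    have hpostop : ∫⁻ ω, ENNReal.ofReal (llr P R ω) ∂P = ⊤ := by
      by_contra h
      exact hInt (hlp_integrable_of_parts (measurable_llr P R) (lt_top_iff_ne_top.2 h)
        (hnegllr.trans_lt ENNReal.one_lt_top))
    have hA : Tendsto (fun n => ∫⁻ ω, ENNReal.ofReal (m n ω) ∂P) atTop (𝓝 ⊤) := by
      rw [← hpostop]
      refine lintegral_tendsto_of_tendsto_of_monotone
        (fun n => ((hmm n).ennreal_ofReal).aemeasurable) ?_ ?_
      · refine Eventually.of_forall fun ω i j hij => ?_
        refine ENNReal.ofReal_le_ofReal ?_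
        rw [hm]; dsimp only
        exact min_le_min le_rfl (Nat.cast_le.2 hij)
      · refine Eventually.of_forall fun ω => ?_
        obtain ⟨N, hN⟩ := exists_nat_ge (llr P R ω)
        refine (tendsto_congr' ?_).2 tendsto_const_nhds
        refine eventually_atTop.2 ⟨N, fun k hk => ?_⟩
        rw [hm]; dsimp only
        rw [min_eq_left (hN.trans (Nat.cast_le.2 hk))]
    have hAn_fin : ∀ n, ∫⁻ ω, ENNReal.ofReal (m n ω) ∂P ≠ ⊤ :=
      fun n => (hlp_lint_pos_lt_top (hmint n)).ne
    have hb_int : ∀ n, ∫ ω, un n ω ∂P = (∫⁻ ω, ENNReal.ofReal (m n ω) ∂P).toReal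
        - (∫⁻ ω, ENNReal.ofReal (-(llr P R ω)) ∂P).toReal := by
      intro n
      rw [integral_congr_ae (hae n),
        integral_eq_lintegral_pos_part_sub_lintegral_neg_part (hmint n)]
      have heq : ∫⁻ ω, ENNReal.ofReal (-(m n ω)) ∂P
          = ∫⁻ ω, ENNReal.ofReal (-(llr P R ω)) ∂P := by
        refine lintegral_congr fun ω => ?_
        rw [hm]; exact hlp_ofReal_neg_min _ n
      rw [heq]
    have hb_atTop : Tendsto (fun n => ∫ ω, un n ω ∂P) atTop atTop := by
      rw [tendsto_atTop]
      intro M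
      set c := (∫⁻ ω, ENNReal.ofReal (-(llr P R ω)) ∂P).toReal with hc
      have hev : ∀ᶠ n in atTop,
          ENNReal.ofReal (M + c) < ∫⁻ ω, ENNReal.ofReal (m n ω) ∂P :=
        hA.eventually_const_lt ENNReal.ofReal_lt_top
      filter_upwards [hev] with n hn
      rw [hb_int n]
      have := (ENNReal.ofReal_le_iff_le_toReal (hAn_fin n)).1 hn.le
      linarith
    have ha_atTop : Tendsto a atTop atTop := by
      rw [tendsto_atTop]
      intro M
      filter_upwards [tendsto_atTop.1 hb_atTop (M + 1),
        hc_tendsto.eventually_lt_const one_pos] with n h1 h2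
      rw [hadef]; dsimp only
      linarith
    have ha_t : Tendsto (fun n => ((a n : ℝ) : EReal)) atTop (𝓝 ⊤) := by
      rw [EReal.tendsto_nhds_top_iff_real]
      intro x
      filter_upwards [tendsto_atTop.1 ha_atTop (x + 1)] with n hn
      exact_mod_cast (by linarith : x < a n)
    exact le_of_tendsto ha_t (Eventually.of_forall fun n => le_sSup (hmem n))
end
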